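/- Let F : C → D, G : D → C with F ⊣ G, and suppose the unit η : Id_C → GF is split (admits a natural retraction). Then for the comonad S = FG on D, the counit θ : S → Id_D composed with the natural splitting exhibits every S-comodule as a retract in the following sense: the unit of the adjunction between the forgetful functor from S-comodules to D and the cofree comodule functor is naturally split. -/

import Mathlib

open CategoryTheory

section Aux

variable {C D : Type*} [Category C] [Category D]
    (F : C ⥤ D) (G : D ⥤ C) (adj : F ⊣ G)
    (σ : F ⋙ G ⟶ 𝟭 C)

/-- The candidate retraction component on underlying objects. -/
private abbrev retrF (A : adj.toComonad.Coalgebra) :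
    F.obj (G.obj A.A) ⟶ A.A :=
  F.map (G.map A.a ≫ σ.app (G.obj A.A)) ≫ adj.counit.app A.A

private lemma retr_hom (A : adj.toComonad.Coalgebra) :
    (adj.toComonad.cofree.obj A.A).a ≫ (adj.toComonad : D ⥤ D).map (retrF F G adj σ A)
      = retrF F G adj σ A ≫ A.a := by
  have coassoc := A.coassoc
  dsimp [Adjunction.toComonad, retrF] at coassoc ⊢
  have hc := adj.counit.naturality A.a
  dsimp at hc
  have hσ1 := σ.naturality (G.map A.a)
  dsimp at hσ1
  have hσ2 := σ.naturality (adj.unit.app (G.obj A.A))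
  dsimp at hσ2
  have hη := adj.unit.naturality (G.map A.a ≫ σ.app (G.obj A.A))
  dsimp at hη
  have coassocG : G.map A.a ≫ G.map (F.map (adj.unit.app (G.obj A.A)))
      = G.map A.a ≫ G.map (F.map (G.map A.a)) := by
    erw [← G.map_comp, ← G.map_comp, coassoc]; rfl
  calc F.map (adj.unit.app (G.obj A.A))
          ≫ F.map (G.map (F.map (G.map A.a ≫ σ.app (G.obj A.A)) ≫ adj.counit.app A.A))
      = F.map (adj.unit.app (G.obj A.A)
          ≫ G.map (F.map (G.map A.a ≫ σ.app (G.obj A.A))) ≫ G.map (adj.counit.app A.A)) := by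
        rw [← F.map_comp, G.map_comp]
    _ = F.map ((G.map A.a ≫ σ.app (G.obj A.A))
          ≫ adj.unit.app (G.obj A.A) ≫ G.map (adj.counit.app A.A)) := by
        rw [← Category.assoc, ← hη, Category.assoc]
    _ = F.map (G.map A.a ≫ σ.app (G.obj A.A)) := by
        rw [adj.right_triangle_components]
        simp
    _ = F.map (G.map A.a ≫ σ.app (G.obj A.A)) ≫ F.map (adj.unit.app (G.obj A.A))
          ≫ adj.counit.app (F.obj (G.obj A.A)) := by
        erw [adj.left_triangle_components]
        simp
    _ = F.map ((G.map A.a ≫ σ.app (G.obj A.A)) ≫ adj.unit.app (G.obj A.A))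
          ≫ adj.counit.app (F.obj (G.obj A.A)) := by
        simp only [F.map_comp, Category.assoc]
    _ = F.map (G.map A.a ≫ G.map (F.map (adj.unit.app (G.obj A.A)))
          ≫ σ.app (G.obj (F.obj (G.obj A.A))))
          ≫ adj.counit.app (F.obj (G.obj A.A)) := by
        erw [hσ2, Category.assoc]; rfl
    _ = F.map (G.map A.a ≫ G.map (F.map (G.map A.a))
          ≫ σ.app (G.obj (F.obj (G.obj A.A))))
          ≫ adj.counit.app (F.obj (G.obj A.A)) := by
        erw [← Category.assoc (G.map A.a), coassocG, Category.assoc]; rfl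
    _ = F.map (G.map A.a ≫ σ.app (G.obj A.A) ≫ G.map A.a)
          ≫ adj.counit.app (F.obj (G.obj A.A)) := by
        erw [hσ1]; rfl
    _ = F.map (G.map A.a ≫ σ.app (G.obj A.A)) ≫ F.map (G.map A.a)
          ≫ adj.counit.app (F.obj (G.obj A.A)) := by
        simp only [F.map_comp, Category.assoc]
        erw [F.map_comp (σ.app (G.obj A.A)), F.map_comp (G.map A.a),
          ← Category.assoc (F.map (G.map A.a)) (F.map (σ.app (G.obj A.A))) (F.map (G.map A.a)),
          Category.assoc (F.map (G.map A.a) ≫ F.map (σ.app (G.obj A.A)))]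
    _ = @id (F.obj (G.obj A.A) ⟶ F.obj (G.obj A.A))
          ((F.map (G.map A.a ≫ σ.app (G.obj A.A)) ≫ adj.counit.app A.A) ≫ A.a) := by
        rw [id_eq]; erw [hc, Category.assoc]; rfl

/-- The retraction as a coalgebra morphism. -/
private def retr (A : adj.toComonad.Coalgebra) :
    adj.toComonad.cofree.obj A.A ⟶ A :=
  { f := retrF F G adj σ A
    h := retr_hom F G adj σ A }

end Aux

/-- If the unit of `F ⊣ G` is naturally split, then for the comonad `S = F ∘ G` on `D`, the
unit of the adjunction between the forgetful functor from `S`-comodules and the cofree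
comodule functor is naturally split. -/
theorem comodule_forget_cofree_unit_split
    {C D : Type*} [Category C] [Category D]
    (F : C ⥤ D) (G : D ⥤ C) (adj : F ⊣ G)
    (σ : F ⋙ G ⟶ 𝟭 C) (hσ : adj.unit ≫ σ = 𝟙 (𝟭 C)) :
    ∃ r : adj.toComonad.forget ⋙ adj.toComonad.cofree ⟶ 𝟭 adj.toComonad.Coalgebra,
      adj.toComonad.adj.unit ≫ r = 𝟙 (𝟭 adj.toComonad.Coalgebra) := by
  refine ⟨{ app := fun A => retr F G adj σ A, naturality := ?_ }, ?_⟩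
  · intro A B g
    ext
    dsimp [retr, retrF, Adjunction.toComonad]
    have hg := g.h
    dsimp [Adjunction.toComonad] at hg
    have hσn := σ.naturality (G.map g.f)
    dsimp at hσn
    have hc := adj.counit.naturality g.f
    dsimp at hc
    calc F.map (G.map g.f) ≫ F.map (G.map B.a ≫ σ.app (G.obj B.A)) ≫ adj.counit.app B.A
        = F.map ((G.map g.f ≫ G.map B.a) ≫ σ.app (G.obj B.A)) ≫ adj.counit.app B.A := by
          erw [Category.assoc (G.map g.f), F.map_comp (G.map g.f),
              Category.assoc (F.map (G.map g.f))]
      _ = F.map ((G.map A.a ≫ G.map (F.map (G.map g.f))) ≫ σ.app (G.obj B.A))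
            ≫ adj.counit.app B.A := by
          erw [← G.map_comp, ← hg, G.map_comp]; rfl
      _ = F.map (G.map A.a ≫ σ.app (G.obj A.A) ≫ G.map g.f) ≫ adj.counit.app B.A := by
          erw [Category.assoc, hσn]; rfl
      _ = (F.map (G.map A.a ≫ σ.app (G.obj A.A)) ≫ adj.counit.app A.A) ≫ g.f := by
          simp only [F.map_comp, Category.assoc]
          erw [F.map_comp (σ.app (G.obj A.A)), Category.assoc (F.map (σ.app (G.obj A.A))), hc,
            F.map_comp (G.map A.a), Category.assoc (F.map (G.map A.a))]; rfl
  · ext A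
    simp only [Comonad.adj_unit]
    dsimp [retr, retrF, Adjunction.toComonad]
    have hcounit := A.counit
    have coassoc := A.coassoc
    dsimp [Adjunction.toComonad] at hcounit coassoc
    have hσ' : adj.unit.app (G.obj A.A) ≫ σ.app (G.obj A.A) = 𝟙 (G.obj A.A) := by
      have := congrArg (fun t => t.app (G.obj A.A)) hσ
      simpa using this
    calc A.a ≫ F.map (G.map A.a ≫ σ.app (G.obj A.A)) ≫ adj.counit.app A.A
        = (A.a ≫ F.map (G.map A.a)) ≫ F.map (σ.app (G.obj A.A)) ≫ adj.counit.app A.A := by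
          erw [F.map_comp (G.map A.a), Category.assoc A.a,
              Category.assoc (F.map (G.map A.a))]; rfl
      _ = A.a ≫ F.map (adj.unit.app (G.obj A.A) ≫ σ.app (G.obj A.A))
            ≫ adj.counit.app A.A := by
          erw [← coassoc]
          simp only [F.map_comp, Category.assoc]
          erw [Category.assoc A.a, Category.assoc (F.map (adj.unit.app (G.obj A.A)))]; rfl
      _ = 𝟙 A.A := by
          rw [hσ', F.map_id]
          erw [Category.id_comp, hcounit]
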